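/- Let ε ∈ (0,1), let u0 ∈ ℝ with 0 < |u0| < 1, and let 0 < h ≤ ε²/2. Then the explicit Euler sequence (u_n) with initial value u_0 = u0 satisfies: if 0 < u0 < 1 then 0 < u_n ≤ 1 for all n and (u_n) is nondecreasing, while if -1 < u0 < 0 then -1 ≤ u_n < 0 for all n and (u_n) is nonincreasing; in both cases u_n converges to sign(u0) as n → ∞. -/

import Mathlib

open Filter

private lemma euler_key (c : ℝ) (hc0 : 0 < c) (hc1 : c ≤ 1/2)
    (u : ℕ → ℝ) (h0 : 0 < u 0) (h1 : u 0 < 1)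
    (hrec : ∀ n : ℕ, u (n + 1) = u n - c * ((u n) ^ 3 - u n)) :
    (∀ n : ℕ, 0 < u n ∧ u n ≤ 1) ∧ Monotone u ∧
      Tendsto u atTop (nhds 1) := by
  have hb : ∀ n : ℕ, 0 < u n ∧ u n ≤ 1 := by
    intro n
    induction n with
    | zero => exact ⟨h0, h1.le⟩
    | succ k ih =>
      obtain ⟨hk0, hk1⟩ := ih
      rw [hrec k]
      have hp : 0 ≤ c * u k * (1 - u k) * (1 + u k) :=
        mul_nonneg (mul_nonneg (mul_nonneg hc0.le hk0.le) (by linarith)) (by linarith)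
      constructor
      · nlinarith [hp]
      · have hA : u k * (1 + u k) ≤ 2 := by nlinarith
        have hB : c * (u k * (1 + u k)) ≤ 1 := by nlinarith
        nlinarith [mul_nonneg (show (0:ℝ) ≤ 1 - u k by linarith)
          (show (0:ℝ) ≤ 1 - c * (u k * (1 + u k)) by linarith)]
  have hmono : Monotone u := by
    apply monotone_nat_of_le_succ
    intro n
    obtain ⟨hn0, hn1⟩ := hb n
    rw [hrec n]
    have hp : 0 ≤ c * u n * (1 - u n) * (1 + u n) :=
      mul_nonneg (mul_nonneg (mul_nonneg hc0.le hn0.le) (by linarith)) (by linarith)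
    nlinarith [hp]
  have hbdd : BddAbove (Set.range u) := ⟨1, by rintro x ⟨n, rfl⟩; exact (hb n).2⟩
  set L : ℝ := ⨆ n, u n with hL
  have htend : Tendsto u atTop (nhds L) := tendsto_atTop_ciSup hmono hbdd
  have hL1 : L ≤ 1 := ciSup_le fun n => (hb n).2
  have hL0 : 0 < L := lt_of_lt_of_le h0 (le_ciSup hbdd 0)
  have htend' : Tendsto (fun n => u (n + 1)) atTop (nhds L) :=
    htend.comp (tendsto_add_atTop_nat 1)
  have hcont : Tendsto (fun n => u n - c * ((u n) ^ 3 - u n)) atTop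
      (nhds (L - c * (L ^ 3 - L))) := by
    have : Continuous (fun x : ℝ => x - c * (x ^ 3 - x)) := by continuity
    exact (this.tendsto L).comp htend
  have heq : L - c * (L ^ 3 - L) = L := by
    apply tendsto_nhds_unique _ htend'
    simpa only [← hrec] using hcont
  have h3 : L ^ 3 - L = 0 := by
    have hc' : c ≠ 0 := ne_of_gt hc0
    have : c * (L ^ 3 - L) = 0 := by linarith
    exact (mul_eq_zero.mp this).resolve_left hc'
  have hLfix : L = 1 := by
    by_contra hne
    have hlt : L < 1 := lt_of_le_of_ne hL1 hne
    nlinarith [mul_pos (mul_pos hL0 (show (0:ℝ) < 1 - L by linarith))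
      (show (0:ℝ) < 1 + L by linarith)]
  exact ⟨hb, hmono, hLfix ▸ htend⟩

/-- Explicit Euler with `0 < |u0| < 1` and `0 < h ≤ ε²/2`: the numerical solution stays
between `0` and `sign u0`, is monotone, and converges to `sign u0`. -/
theorem explicit_euler_monotone_small_initial
    (ε : ℝ) (hε0 : 0 < ε) (hε1 : ε < 1)
    (u0 : ℝ) (hu0 : 0 < |u0|) (hu0' : |u0| < 1)
    (h : ℝ) (hh0 : 0 < h) (hh1 : h ≤ ε ^ 2 / 2)
    (u : ℕ → ℝ) (hinit : u 0 = u0)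
    (hrec : ∀ n : ℕ, u (n + 1) = u n - (h / ε ^ 2) * ((u n) ^ 3 - u n)) :
    (0 < u0 ∧ u0 < 1 → (∀ n : ℕ, 0 < u n ∧ u n ≤ 1) ∧ Monotone u) ∧
    (-1 < u0 ∧ u0 < 0 → (∀ n : ℕ, -1 ≤ u n ∧ u n < 0) ∧ Antitone u) ∧
    Filter.Tendsto u Filter.atTop (nhds (if 0 < u0 then (1 : ℝ) else -1)) := by
  have hε2 : (0:ℝ) < ε ^ 2 := by positivity
  set c : ℝ := h / ε ^ 2 with hc
  have hc0 : 0 < c := by positivity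
  have hc1 : c ≤ 1 / 2 := by
    rw [hc, div_le_div_iff₀ hε2 two_pos] at *
    linarith [hh1]
  rcases lt_or_gt_of_ne (fun hz => by simp [hz] at hu0 : u0 ≠ 0) with hneg | hpos
  · -- u0 < 0
    have hgt : -1 < u0 := by
      rcases abs_lt.mp hu0' with ⟨ha, _⟩; linarith
    have hrec' : ∀ n : ℕ, (fun n => -u n) (n + 1) =
        (fun n => -u n) n - c * (((fun n => -u n) n) ^ 3 - (fun n => -u n) n) := by
      intro n; simp only; rw [hrec n]; ring
    have key := euler_key c hc0 hc1 (fun n => -u n)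
      (by simpa [hinit] using hneg) (by simp [hinit]; linarith) hrec'
    obtain ⟨hb, hmono, htend⟩ := key
    refine ⟨fun ⟨h1, _⟩ => absurd h1 (by linarith), fun _ => ?_, ?_⟩
    · constructor
      · intro n
        obtain ⟨h1, h2⟩ := hb n
        constructor <;> linarith
      · intro a b hab
        have := hmono hab
        simp only at this; linarith
    · rw [if_neg (by linarith)]
      have := htend.neg
      simpa using this
  · -- u0 > 0
    have hlt : u0 < 1 := by rcases abs_lt.mp hu0' with ⟨_, hb⟩; linarith
    have key := euler_key c hc0 hc1 u (hinit ▸ hpos) (hinit ▸ hlt) hrec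
    obtain ⟨hb, hmono, htend⟩ := key
    refine ⟨fun _ => ⟨hb, hmono⟩, fun ⟨_, h2⟩ => absurd h2 (by linarith), ?_⟩
    rw [if_pos hpos]; exact htend
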